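/- Define γ(n) = Σ_{k=0}^n [n choose k]_q q^{k²}/(−q;q)_k. Then for every nonnegative integer n: Σ_{k=0}^n q^{k²} γ(k) / ((q;q)_k (q;q)_{n−k}) = Σ_{k=−n}^n (−1)^k q^{3k²} / ((q;q)_{n−k} (q;q)_{n+k}). -/

import Mathlib

open Finset

noncomputable def qp (x q : ℂ) (n : ℕ) : ℂ := ∏ j ∈ Finset.range n, (1 - x * q ^ j)

noncomputable def qpinf (x q : ℂ) : ℂ := ∏' j : ℕ, (1 - x * q ^ j)

noncomputable def qbinom (q : ℂ) (n k : ℕ) : ℂ := qp q q n / (qp q q k * qp q q (n - k))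

noncomputable def RS (a b q : ℂ) (n : ℕ) : ℂ :=
  ∑ k ∈ Finset.range (n + 1), qbinom q n k * a ^ k * b ^ (n - k)

noncomputable def Tsum (q : ℂ) (r n s : ℕ) : ℂ :=
  ∑ k ∈ Finset.range (n + 1),
    qp (q ^ (-(2 * (n : ℤ)))) (q ^ 2) k / (qp q q k * qp (q ^ ((1 : ℤ) + r - n)) q k)
      * q ^ ((2 - (s : ℤ)) * k)

noncomputable def gam (q : ℂ) (n : ℕ) : ℂ :=
  ∑ k ∈ Finset.range (n + 1), qbinom q n k * q ^ (k ^ 2) / qp (-q) q k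

set_option linter.unusedSectionVars false
set_option maxHeartbeats 1000000

lemma qp_succ (x q : ℂ) (n : ℕ) : qp x q (n+1) = qp x q n * (1 - x * q^n) :=
  Finset.prod_range_succ _ _

lemma qp_zero (x q : ℂ) : qp x q 0 = 1 := Finset.prod_range_zero _

lemma qp_ne_zero {x y : ℂ} (hx : ‖x‖ < 1) (hy : ‖y‖ ≤ 1) (n : ℕ) :
    qp x y n ≠ 0 := by
  refine Finset.prod_ne_zero_iff.2 fun j _ => ?_
  intro h
  have h1 : x * y ^ j = 1 := by
    have := sub_eq_zero.mp h; linear_combination -this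
  have h2 : ‖x * y ^ j‖ < 1 := by
    rw [norm_mul, norm_pow]
    calc ‖x‖ * ‖y‖ ^ j ≤ ‖x‖ * 1 := by
          exact mul_le_mul_of_nonneg_left (pow_le_one₀ (norm_nonneg y) hy) (norm_nonneg x)
      _ < 1 := by simpa using hx
  rw [h1] at h2; simp at h2

lemma qp_mul_qp_neg (q : ℂ) (m : ℕ) : qp q q m * qp (-q) q m = qp (q^2) (q^2) m := by
  induction m with
  | zero => simp [qp_zero]
  | succ m ih =>
    rw [qp_succ, qp_succ, qp_succ, ← ih]
    ring

lemma qp_add (x q : ℂ) (a b : ℕ) : qp x q (a+b) = qp x q a * qp (x*q^a) q b := by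
  induction b with
  | zero => simp [qp_zero]
  | succ b ih =>
    rw [show a + (b+1) = (a+b)+1 from rfl, qp_succ, ih, qp_succ]
    ring_nf

lemma qp_even_odd (q : ℂ) (m : ℕ) : qp q q (2*m) = qp q (q^2) m * qp (q^2) (q^2) m := by
  induction m with
  | zero => simp [qp_zero]
  | succ m ih =>
    rw [show 2*(m+1) = (2*m)+1+1 from by ring, qp_succ, qp_succ, qp_succ, qp_succ, ih]
    ring_nf

section
variable {q : ℂ} (hP : ∀ m : ℕ, qp q q m ≠ 0)
include hP

omit hP in
lemma pow_tri (i : ℕ) : (q:ℂ)^((i+1)*i) = q^(i*(i-1)) * q^(2*i) := by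
  rw [← pow_add]; congr 1
  cases i with
  | zero => rfl
  | succ k => rw [Nat.add_sub_cancel]; ring

omit hP in
lemma pow_sq_split (N : ℕ) : (q:ℂ)^(N*N) = q^(N*(N-1)) * q^N := by
  rw [← pow_add]; congr 1
  cases N with
  | zero => rfl
  | succ k => rw [Nat.add_sub_cancel]; ring

lemma pascal (i m : ℕ) :
    qp q q (i+m+2) / (qp q q (i+1) * qp q q (m+1))
      = qp q q (i+m+1) / (qp q q (i+1) * qp q q m)
        + q^(m+1) * (qp q q (i+m+1) / (qp q q i * qp q q (m+1))) := by
  have h1 : qp q q (i+m+2) = qp q q (i+m+1) * (1 - q*q^(i+m+1)) := by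
    rw [show i+m+2 = (i+m+1)+1 from rfl, qp_succ]
  have h2 : qp q q (i+1) = qp q q i * (1 - q*q^i) := by rw [qp_succ]
  have h3 : qp q q (m+1) = qp q q m * (1 - q*q^m) := by rw [qp_succ]
  have hi := hP i
  have hm := hP m
  have him := hP (i+m+1)
  have f1 : (1 - q*q^i) ≠ 0 := by
    have := hP (i+1); rw [h2] at this; exact right_ne_zero_of_mul this
  have f2 : (1 - q*q^m) ≠ 0 := by
    have := hP (m+1); rw [h3] at this; exact right_ne_zero_of_mul this
  rw [h1, h2, h3]
  field_simp
  ring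

lemma lemV : ∀ (N : ℕ) (a : ℂ),
    ∑ i ∈ range (N+1),
      qp q q N / (qp q q i * qp q q (N-i)) * (q^(i*(i-1)) * a^i * qp (a*q^i) q (N-i)) = 1 := by
  intro N
  induction N with
  | zero => intro a; simp [qp_zero]
  | succ N ih =>
    intro a
    rw [Finset.sum_range_succ]
    -- the last term
    have hlast : qp q q (N+1) / (qp q q (N+1) * qp q q (N+1-(N+1)))
        * (q^((N+1)*((N+1)-1)) * a^(N+1) * qp (a*q^(N+1)) q (N+1-(N+1)))
        = a^(N+1) * q^((N+1)*N) := by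
      rw [Nat.sub_self, Nat.add_sub_cancel]
      simp only [qp_zero]
      field_simp [hP (N+1)]
    -- Step B : factor (1 - a q^N) out of the main sum
    have hB : ∑ i ∈ range (N+1),
          qp q q (N+1) / (qp q q i * qp q q (N+1-i)) * (q^(i*(i-1)) * a^i * qp (a*q^i) q (N+1-i))
        = (∑ i ∈ range (N+1),
            qp q q (N+1) / (qp q q i * qp q q (N+1-i)) * (q^(i*(i-1)) * a^i * qp (a*q^i) q (N-i)))
          * (1 - a*q^N) := by
      rw [Finset.sum_mul]
      refine Finset.sum_congr rfl fun i hi => ?_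
      have hiN : i ≤ N := Nat.lt_succ_iff.mp (Finset.mem_range.mp hi)
      obtain ⟨m, rfl⟩ : ∃ m, N = i + m := ⟨N-i, by omega⟩
      rw [show i+m+1-i = m+1 from by omega, show i+m-i = m from by omega,
        qp_succ (a*q^i) q m]
      ring
    rw [hB]
    -- Step C : peel off the i = 0 term
    rw [Finset.sum_range_succ']
    -- now handle the i = 0 term :
    have h0 : qp q q (N+1) / (qp q q 0 * qp q q (N+1-0)) * (q^(0*(0-1)) * a^0 * qp (a*q^0) q (N-0))
        = qp a q N := by
      rw [Nat.sub_zero, Nat.sub_zero, qp_zero]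
      field_simp [hP (N+1)]
      simp
    rw [h0]
    -- Step D : Pascal on the shifted sum
    have hD : ∑ i ∈ range N,
          qp q q (N+1) / (qp q q (i+1) * qp q q (N+1-(i+1))) * (q^((i+1)*((i+1)-1)) * a^(i+1) * qp (a*q^(i+1)) q (N-(i+1)))
        = (∑ i ∈ range N,
            qp q q N / (qp q q (i+1) * qp q q (N-(i+1))) * (q^((i+1)*((i+1)-1)) * a^(i+1) * qp (a*q^(i+1)) q (N-(i+1))))
          + (∑ i ∈ range N,
            q^(N-i) * (qp q q N / (qp q q i * qp q q (N-i))) * (q^((i+1)*((i+1)-1)) * a^(i+1) * qp (a*q^(i+1)) q (N-(i+1)))) := by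
      rw [← Finset.sum_add_distrib]
      refine Finset.sum_congr rfl fun i hi => ?_
      have hiN : i < N := Finset.mem_range.mp hi
      obtain ⟨m, rfl⟩ : ∃ m, N = i + 1 + m := ⟨N-i-1, by omega⟩
      rw [show i+1+m+1-(i+1) = m+1 from by omega, show i+1+m-(i+1) = m from by omega,
        show i+1+m-i = m+1 from by omega, show (i+1)*((i+1)-1) = (i+1)*i from by rw [Nat.add_sub_cancel],
        show i+1+m+1 = i+m+2 from by omega, show i+1+m = i+m+1 from by omega,
        pascal hP]
      ring
    rw [hD]
    -- Step E : identify the first sum using ih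
    have hih := ih a
    rw [Finset.sum_range_succ'] at hih
    have h0' : qp q q N / (qp q q 0 * qp q q (N-0)) * (q^(0*(0-1)) * a^0 * qp (a*q^0) q (N-0))
        = qp a q N := by
      rw [Nat.sub_zero, qp_zero]
      field_simp [hP N]
      simp
    rw [h0'] at hih
    -- Step F : the telescoped second sum
    have hF : (∑ i ∈ range N,
            q^(N-i) * (qp q q N / (qp q q i * qp q q (N-i))) * (q^((i+1)*((i+1)-1)) * a^(i+1) * qp (a*q^(i+1)) q (N-(i+1))))
          * (1 - a*q^N)
        = a*q^N * ∑ i ∈ range N,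
            qp q q N / (qp q q i * qp q q (N-i)) * (q^(i*(i-1)) * (a*q)^i * qp (a*q*q^i) q (N-i)) := by
      rw [Finset.sum_mul, Finset.mul_sum]
      refine Finset.sum_congr rfl fun i hi => ?_
      have hiN : i < N := Finset.mem_range.mp hi
      obtain ⟨m, rfl⟩ : ∃ m, N = i + 1 + m := ⟨N-i-1, by omega⟩
      rw [show i+1+m-(i+1) = m from by omega, show i+1+m-i = m+1 from by omega,
        show (i+1)*((i+1)-1) = (i+1)*i from by rw [Nat.add_sub_cancel],
        show a*q^(i+1) = a*q*q^i from by ring,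
        qp_succ (a*q*q^i) q m, pow_tri]
      ring
    have hwN : qp q q N / (qp q q N * qp q q (N-N)) * (q^(N*(N-1)) * (a*q)^N * qp (a*q*q^N) q (N-N))
        = a^N * q^(N*N) := by
      rw [Nat.sub_self]
      simp only [qp_zero]
      field_simp [hP N]
      rw [pow_sq_split]
      ring
    have hsum : (∑ i ∈ range N,
            qp q q N / (qp q q i * qp q q (N-i)) * (q^(i*(i-1)) * (a*q)^i * qp (a*q*q^i) q (N-i)))
        = 1 - a^N * q^(N*N) := by
      have h := ih (a*q)
      rw [Finset.sum_range_succ, hwN] at h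
      linear_combination h
    rw [hlast]
    linear_combination (1 - a*q^N) * hih + hF + (a*q^N) * hsum
end

noncomputable def cb (q : ℂ) (m : ℕ) (k : ℤ) : ℂ :=
  if 0 ≤ k ∧ k ≤ (m:ℤ) then qp q q m / (qp q q k.toNat * qp q q (m - k.toNat)) else 0

lemma cb_eq_zero {q : ℂ} {m : ℕ} {k : ℤ} (h : k < 0 ∨ (m:ℤ) < k) : cb q m k = 0 := by
  rw [cb, if_neg]; omega

section
variable {q : ℂ} (hP : ∀ m : ℕ, qp q q m ≠ 0)
include hP

lemma cb_symm (m : ℕ) (k : ℤ) : cb q m k = cb q m ((m:ℤ) - k) := by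
  rw [cb, cb]
  by_cases h : 0 ≤ k ∧ k ≤ (m:ℤ)
  · rw [if_pos h, if_pos (by omega)]
    rw [show ((m:ℤ)-k).toNat = m - k.toNat from by omega,
      show m - (m - k.toNat) = k.toNat from by omega]
    ring
  · rw [if_neg h, if_neg (by omega)]

lemma cb_pascal1 (m : ℕ) (k : ℤ) :
    cb q (m+1) k = cb q m (k-1) + q^(k.toNat) * cb q m k := by
  rcases lt_or_ge k 0 with h | h
  · rw [cb_eq_zero (Or.inl h), cb_eq_zero (Or.inl (by omega)), cb_eq_zero (Or.inl h)]
    ring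
  rcases eq_or_lt_of_le h with h0 | h0
  · -- k = 0
    rw [← h0]
    rw [cb_eq_zero (Or.inl (by omega : (0:ℤ)-1 < 0))]
    rw [cb, cb, if_pos (by omega), if_pos (by omega)]
    simp [qp_zero, hP m, hP (m+1)]
  rcases lt_or_ge (m:ℤ) k with h2 | h2
  · rcases eq_or_lt_of_le (by omega : (m:ℤ)+1 ≤ k) with h3 | h3
    · -- k = m+1
      rw [cb_eq_zero (Or.inr h2), cb, cb, if_pos (by omega), if_pos (by omega)]
      rw [show (k-1).toNat = m from by omega, show m - m = 0 from by omega,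
        show k.toNat = m+1 from by omega, show m+1-(m+1) = 0 from by omega]
      simp [qp_zero, hP m, hP (m+1)]
    · rw [cb_eq_zero (Or.inr (by push_cast; omega)), cb_eq_zero (Or.inr (by omega)),
        cb_eq_zero (Or.inr h2)]
      ring
  · -- 1 ≤ k ≤ m : genuine Pascal
    obtain ⟨b, rfl⟩ : ∃ b : ℕ, k = (b:ℤ)+1 := ⟨(k-1).toNat, by omega⟩
    obtain ⟨i, rfl⟩ : ∃ i : ℕ, m = b+1+i := ⟨m - b - 1, by omega⟩
    rw [cb, cb, cb, if_pos (by push_cast; omega), if_pos (by push_cast; omega),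
      if_pos (by push_cast; omega)]
    rw [show ((b:ℤ)+1).toNat = b+1 from by omega, show ((b:ℤ)+1-1).toNat = b from by omega,
      show b+1+i+1 - (b+1) = i+1 from by omega, show b+1+i - b = i+1 from by omega,
      show b+1+i - (b+1) = i from by omega]
    have e1 : qp q q (b+1+i+1) = qp q q (b+1+i) * (1 - q*q^(b+i+1)) := by
      rw [qp_succ]; ring_nf
    have e2 : qp q q (b+1) = qp q q b * (1 - q*q^b) := by rw [qp_succ]
    have e3 : qp q q (i+1) = qp q q i * (1 - q*q^i) := by rw [qp_succ]
    have f2 : (1 - q*q^b) ≠ 0 := by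
      have := hP (b+1); rw [e2] at this; exact right_ne_zero_of_mul this
    have f3 : (1 - q*q^i) ≠ 0 := by
      have := hP (i+1); rw [e3] at this; exact right_ne_zero_of_mul this
    rw [show b+1+i = b+(i+1) from by omega] at e1 ⊢
    rw [e1, e2, e3]
    field_simp [hP b, hP i, hP (b+(i+1))]
    ring

lemma cb_pascal2 (m : ℕ) (k : ℤ) :
    cb q (m+1) k = cb q m k + q^(((m:ℤ)+1-k).toNat) * cb q m (k-1) := by
  rw [cb_symm hP (m+1) k, show ((m+1:ℕ):ℤ) = (m:ℤ)+1 from by push_cast; ring,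
    cb_pascal1 hP m ((m:ℤ)+1-k)]
  rw [show (m:ℤ)+1-k-1 = (m:ℤ)-k from by ring, ← cb_symm hP m k]
  have h2 : cb q m ((m:ℤ)+1-k) = cb q m (k-1) := by
    rw [cb_symm hP m (k-1)]
    congr 1
    ring
  rw [h2]

lemma cb_factor (M : ℕ) (k : ℤ) :
    (1 - q^(k.toNat)) * cb q (M+1) k = (1 - q*q^M) * cb q M (k-1) := by
  rcases lt_or_ge k 0 with h | h
  · rw [cb_eq_zero (Or.inl h), cb_eq_zero (Or.inl (by omega))]; ring
  rcases eq_or_lt_of_le h with h0 | h0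
  · rw [← h0, cb_eq_zero (Or.inl (by omega : (0:ℤ)-1 < 0))]
    simp
  rcases lt_or_ge ((M:ℤ)+1) k with h2 | h2
  · rw [cb_eq_zero (Or.inr (by push_cast; omega)), cb_eq_zero (Or.inr (by omega))]; ring
  · -- 1 ≤ k ≤ M+1
    obtain ⟨b, rfl⟩ : ∃ b : ℕ, k = (b:ℤ)+1 := ⟨(k-1).toNat, by omega⟩
    obtain ⟨i, rfl⟩ : ∃ i : ℕ, M = b+i := ⟨M - b, by omega⟩
    rw [cb, cb, if_pos (by push_cast; omega), if_pos (by push_cast; omega)]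
    rw [show ((b:ℤ)+1).toNat = b+1 from by omega, show ((b:ℤ)+1-1).toNat = b from by omega,
      show b+i+1 - (b+1) = i from by omega, show b+i - b = i from by omega]
    have e1 : qp q q (b+i+1) = qp q q (b+i) * (1 - q*q^(b+i)) := by rw [qp_succ]
    have e2 : qp q q (b+1) = qp q q b * (1 - q*q^b) := by rw [qp_succ]
    have f2 : (1 - q*q^b) ≠ 0 := by
      have := hP (b+1); rw [e2] at this; exact right_ne_zero_of_mul this
    rw [e1, e2]
    field_simp [hP b, hP i, hP (b+i)]
    ring

omit hP in
lemma neg_one_zpow_succ (j : ℤ) : (-1:ℂ)^(j+1) = -(-1:ℂ)^j := by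
  rw [zpow_add_one₀ (by norm_num : (-1:ℂ) ≠ 0)]; ring

omit hP in
lemma sum_shift (a b : ℤ) (f : ℤ → ℂ) :
    ∑ j ∈ Icc a b, f j = ∑ j ∈ Icc (a-1) (b-1), f (j+1) := by
  have h := Finset.sum_map (Finset.Icc (a-1) (b-1)) (addRightEmbedding 1) f
  rw [Finset.map_add_right_Icc] at h
  rw [show a-1+1 = a from by ring, show b-1+1 = b from by ring] at h
  rw [h]
  simp [addRightEmbedding_apply]

lemma gauss (hq0 : q ≠ 0) (n : ℕ) :
    ∑ j ∈ Icc (-(n:ℤ)) (n:ℤ), (-1:ℂ)^j * q^(j^2) * cb q (2*n) ((n:ℤ)+j)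
      = qp q (q^2) n := by
  induction n with
  | zero =>
    simp only [Nat.cast_zero, neg_zero, Icc_self, sum_singleton]
    simp [cb, qp_zero]
  | succ n ih =>
    have hcast : ((n+1:ℕ):ℤ) = (n:ℤ)+1 := by push_cast; ring
    -- Pascal step
    have step1 : ∀ j ∈ Icc (-((n+1:ℕ):ℤ)) ((n+1:ℕ):ℤ),
        (-1:ℂ)^j * q^(j^2) * cb q (2*(n+1)) (((n+1:ℕ):ℤ)+j)
        = (-1:ℂ)^j * q^(j^2) * cb q (2*n+1) (((n+1:ℕ):ℤ)+j)
          + (-1:ℂ)^j * q^(j^2) * q^((((2*n+1:ℕ):ℤ)+1-(((n+1:ℕ):ℤ)+j)).toNat)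
            * cb q (2*n+1) (((n+1:ℕ):ℤ)+j-1) := by
      intro j hj
      rw [show 2*(n+1) = (2*n+1)+1 from by ring, cb_pascal2 hP (2*n+1) (((n+1:ℕ):ℤ)+j)]
      ring
    rw [Finset.sum_congr rfl step1, Finset.sum_add_distrib]
    -- shift the second sum
    have step2 : ∑ j ∈ Icc (-((n+1:ℕ):ℤ)) ((n+1:ℕ):ℤ),
        (-1:ℂ)^j * q^(j^2) * q^((((2*n+1:ℕ):ℤ)+1-(((n+1:ℕ):ℤ)+j)).toNat)
            * cb q (2*n+1) (((n+1:ℕ):ℤ)+j-1)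
        = ∑ j ∈ Icc (-((n+1:ℕ):ℤ)-1) (((n+1:ℕ):ℤ)-1),
        (-1:ℂ)^(j+1) * q^((j+1)^2) * q^((((2*n+1:ℕ):ℤ)+1-(((n+1:ℕ):ℤ)+(j+1))).toNat)
            * cb q (2*n+1) (((n+1:ℕ):ℤ)+(j+1)-1) := by
      exact sum_shift _ _ _
    rw [step2]
    -- move shifted sum onto the common index range
    have e3a : (∑ j ∈ Icc (-((n+1:ℕ):ℤ)-1) (((n+1:ℕ):ℤ)-1),
        (-1:ℂ)^(j+1) * q^((j+1)^2) * q^((((2*n+1:ℕ):ℤ)+1-(((n+1:ℕ):ℤ)+(j+1))).toNat)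
            * cb q (2*n+1) (((n+1:ℕ):ℤ)+(j+1)-1))
        = ∑ j ∈ Icc (-((n+1:ℕ):ℤ)-1) ((n+1:ℕ):ℤ),
        (-1:ℂ)^(j+1) * q^((j+1)^2) * q^((((2*n+1:ℕ):ℤ)+1-(((n+1:ℕ):ℤ)+(j+1))).toNat)
            * cb q (2*n+1) (((n+1:ℕ):ℤ)+(j+1)-1) := by
      refine Finset.sum_subset (Finset.Icc_subset_Icc le_rfl (by omega)) ?_
      intro x hx hnx
      simp only [Finset.mem_Icc] at hx hnx
      have hx1 : x = ((n+1:ℕ):ℤ) := by omega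
      rw [cb_eq_zero (Or.inr (by rw [hx1]; push_cast; omega))]
      ring
    have e3b : (∑ j ∈ Icc (-((n+1:ℕ):ℤ)) ((n+1:ℕ):ℤ),
        (-1:ℂ)^(j+1) * q^((j+1)^2) * q^((((2*n+1:ℕ):ℤ)+1-(((n+1:ℕ):ℤ)+(j+1))).toNat)
            * cb q (2*n+1) (((n+1:ℕ):ℤ)+(j+1)-1))
        = ∑ j ∈ Icc (-((n+1:ℕ):ℤ)-1) ((n+1:ℕ):ℤ),
        (-1:ℂ)^(j+1) * q^((j+1)^2) * q^((((2*n+1:ℕ):ℤ)+1-(((n+1:ℕ):ℤ)+(j+1))).toNat)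
            * cb q (2*n+1) (((n+1:ℕ):ℤ)+(j+1)-1) := by
      refine Finset.sum_subset (Finset.Icc_subset_Icc (by omega) le_rfl) ?_
      intro x hx hnx
      simp only [Finset.mem_Icc] at hx hnx
      have hx1 : x = -((n+1:ℕ):ℤ)-1 := by omega
      rw [cb_eq_zero (Or.inl (by rw [hx1]; push_cast; omega))]
      ring
    rw [e3a, ← e3b, ← Finset.sum_add_distrib]
    -- pointwise combination
    have step4 : ∀ j ∈ Icc (-((n+1:ℕ):ℤ)) ((n+1:ℕ):ℤ),
        ((-1:ℂ)^j * q^(j^2) * cb q (2*n+1) (((n+1:ℕ):ℤ)+j)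
          + (-1:ℂ)^(j+1) * q^((j+1)^2) * q^((((2*n+1:ℕ):ℤ)+1-(((n+1:ℕ):ℤ)+(j+1))).toNat)
            * cb q (2*n+1) (((n+1:ℕ):ℤ)+(j+1)-1))
        = (1 - q*q^(2*n)) * ((-1:ℂ)^j * q^(j^2) * cb q (2*n) ((n:ℤ)+j)) := by
      intro j hj
      simp only [Finset.mem_Icc] at hj
      have hA : cb q (2*n+1) (((n+1:ℕ):ℤ)+(j+1)-1) = cb q (2*n+1) (((n+1:ℕ):ℤ)+j) := by
        congr 1; ring
      by_cases hj2 : j = ((n+1:ℕ):ℤ)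
      · rw [hA, hj2,
          cb_eq_zero (Or.inr (by push_cast; omega : ((2*n+1:ℕ):ℤ) < ((n+1:ℕ):ℤ)+((n+1:ℕ):ℤ))),
          cb_eq_zero (Or.inr (by push_cast; omega : ((2*n:ℕ):ℤ) < (n:ℤ)+((n+1:ℕ):ℤ)))]
        ring
      · have hjn : j ≤ (n:ℤ) := by omega
        have hF := cb_factor hP (2*n) (((n+1:ℕ):ℤ)+j)
        have hB : cb q (2*n) (((n+1:ℕ):ℤ)+j-1) = cb q (2*n) ((n:ℤ)+j) := by
          congr 1; push_cast; ring
        rw [hB] at hF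
        have ht1 : (q:ℂ)^(((((n+1:ℕ):ℤ))+j).toNat) = q^(((n+1:ℕ):ℤ)+j) := by
          rw [← zpow_natCast]; congr 1; omega
        rw [ht1] at hF
        have ht2 : (q:ℂ)^((((2*n+1:ℕ):ℤ)+1-(((n+1:ℕ):ℤ)+(j+1))).toNat) = q^((n:ℤ)-j) := by
          rw [← zpow_natCast]; congr 1; omega
        rw [hA, ht2, neg_one_zpow_succ]
        have hsq : (q:ℂ)^((j+1)^2) = q^(j^2) * q^(2*j+1) := by
          rw [← zpow_add₀ hq0]; congr 1; ring
        have hcomb : (q:ℂ)^(2*j+1) * q^((n:ℤ)-j) = q^(((n+1:ℕ):ℤ)+j) := by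
          rw [← zpow_add₀ hq0]; congr 1; push_cast; ring
        rw [hsq]
        linear_combination ((-1:ℂ)^j * q^(j^2)) * hF
          - ((-1:ℂ)^j * q^(j^2) * cb q (2*n+1) (((n+1:ℕ):ℤ)+j)) * hcomb
    rw [Finset.sum_congr rfl step4, ← Finset.mul_sum]
    -- shrink range and apply ih
    have e5 : (∑ j ∈ Icc (-(n:ℤ)) (n:ℤ), (-1:ℂ)^j * q^(j^2) * cb q (2*n) ((n:ℤ)+j))
        = ∑ j ∈ Icc (-((n+1:ℕ):ℤ)) ((n+1:ℕ):ℤ), (-1:ℂ)^j * q^(j^2) * cb q (2*n) ((n:ℤ)+j) := by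
      refine Finset.sum_subset (Finset.Icc_subset_Icc (by omega) (by omega)) ?_
      intro x hx hnx
      simp only [Finset.mem_Icc] at hx hnx
      have hx1 : x = ((n+1:ℕ):ℤ) ∨ x = -((n+1:ℕ):ℤ) := by omega
      rcases hx1 with h | h
      · rw [cb_eq_zero (Or.inr (by rw [h]; push_cast; omega))]; ring
      · rw [cb_eq_zero (Or.inl (by rw [h]; push_cast; omega))]; ring
    rw [← e5, ih, qp_succ]
    ring

lemma lemK (s n : ℕ) (hs : s ≤ n) :
    ∑ j ∈ Icc s n, q^(j^2) / (qp q q (n-j) * qp q q (j-s) * qp q q (j+s))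
      = q^(s^2) / (qp q q (n-s) * qp q q (n+s)) := by
  rw [← Finset.Ico_add_one_right_eq_Icc, Finset.sum_Ico_eq_sum_range, show n + 1 - s = (n-s) + 1 from by omega]
  have h := lemV hP (n-s) (q^(2*s+1))
  have key : ∀ i ∈ range ((n-s)+1),
      q^((s+i)^2) / (qp q q (n-(s+i)) * qp q q (s+i-s) * qp q q (s+i+s))
      = q^(s^2)/(qp q q (n-s) * qp q q (n+s))
        * (qp q q (n-s) / (qp q q i * qp q q ((n-s)-i))
          * (q^(i*(i-1)) * (q^(2*s+1))^i * qp (q^(2*s+1)*q^i) q ((n-s)-i))) := by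
    intro i hi
    have hin : i ≤ n - s := Nat.lt_succ_iff.mp (Finset.mem_range.mp hi)
    obtain ⟨m, rfl⟩ : ∃ m, n = s + i + m := ⟨n-s-i, by omega⟩
    rw [show s+i+m-(s+i) = m from by omega, show s+i-s = i from by omega,
      show s+i+s = 2*s+i from by omega, show s+i+m-s = i+m from by omega,
      show s+i+m+s = 2*s+i+m from by omega, show i+m-i = m from by omega,
      show (q:ℂ)^(2*s+1)*q^i = q*q^(2*s+i) from by ring,
      qp_add q q (2*s+i) m]
    have hW : qp (q*q^(2*s+i)) q m ≠ 0 := by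
      have h2 := hP (2*s+i+m)
      rw [qp_add q q (2*s+i) m] at h2
      exact right_ne_zero_of_mul h2
    have hexp : (q:ℂ)^(s^2) * (q^(i*(i-1)) * (q^(2*s+1))^i) = q^((s+i)^2) := by
      rw [← pow_mul, ← pow_add, ← pow_add]
      congr 1
      cases i with
      | zero => simp
      | succ k => rw [Nat.add_sub_cancel]; ring
    rw [← hexp]
    field_simp [hP i, hP m, hP (i+m), hP (2*s+i), hW]
  rw [Finset.sum_congr rfl key, ← Finset.mul_sum, h, mul_one]

lemma gauss_recip (hq0 : q ≠ 0) (hO : ∀ m, qp q (q^2) m ≠ 0) (hE : ∀ m, qp (q^2) (q^2) m ≠ 0)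
    (m : ℕ) :
    ∑ r ∈ Icc (-(m:ℤ)) (m:ℤ),
        ((-1:ℂ)^r * q^(r^2)) / (qp q q ((m:ℤ)-r).toNat * qp q q ((m:ℤ)+r).toNat)
      = 1 / qp (q^2) (q^2) m := by
  have h := gauss hP hq0 m
  have key : ∀ r ∈ Icc (-(m:ℤ)) (m:ℤ),
      ((-1:ℂ)^r * q^(r^2)) / (qp q q ((m:ℤ)-r).toNat * qp q q ((m:ℤ)+r).toNat)
      = ((-1:ℂ)^r * q^(r^2) * cb q (2*m) ((m:ℤ)+r)) / qp q q (2*m) := by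
    intro r hr
    simp only [Finset.mem_Icc] at hr
    rw [cb, if_pos (by push_cast; omega)]
    rw [show 2*m - ((m:ℤ)+r).toNat = ((m:ℤ)-r).toNat from by omega]
    field_simp [hP (((m:ℤ)-r).toNat), hP (((m:ℤ)+r).toNat), hP (2*m)]
  rw [Finset.sum_congr rfl key, ← Finset.sum_div, h, qp_even_odd]
  field_simp [hO m, hE m]

lemma bailey_step (hq0 : q ≠ 0) (α : ℤ → ℂ) (n : ℕ) :
    ∑ j ∈ range (n+1),
        q^(j^2) * (∑ r ∈ Icc (-(j:ℤ)) (j:ℤ),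
            α r / (qp q q ((j:ℤ)-r).toNat * qp q q ((j:ℤ)+r).toNat)) / qp q q (n-j)
      = ∑ r ∈ Icc (-(n:ℤ)) (n:ℤ),
          q^((r:ℤ)^2) * α r / (qp q q ((n:ℤ)-r).toNat * qp q q ((n:ℤ)+r).toNat) := by
  have step1 : ∀ j ∈ range (n+1),
      q^(j^2) * (∑ r ∈ Icc (-(j:ℤ)) (j:ℤ),
          α r / (qp q q ((j:ℤ)-r).toNat * qp q q ((j:ℤ)+r).toNat)) / qp q q (n-j)
      = ∑ r ∈ Icc (-(n:ℤ)) (n:ℤ),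
          (if r.natAbs ≤ j
            then q^(j^2) * α r
              / (qp q q (n-j) * qp q q ((j:ℤ)-r).toNat * qp q q ((j:ℤ)+r).toNat)
            else 0) := by
    intro j hj
    have hjn : j ≤ n := Nat.lt_succ_iff.mp (Finset.mem_range.mp hj)
    have hfil : Finset.filter (fun r : ℤ => r.natAbs ≤ j) (Icc (-(n:ℤ)) (n:ℤ))
        = Icc (-(j:ℤ)) (j:ℤ) := by
      ext r
      simp only [Finset.mem_filter, Finset.mem_Icc]
      omega
    rw [Finset.sum_ite, Finset.sum_const_zero, add_zero, hfil,
      Finset.mul_sum, Finset.sum_div]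
    exact Finset.sum_congr rfl fun r _ => by ring
  rw [Finset.sum_congr rfl step1, Finset.sum_comm]
  refine Finset.sum_congr rfl fun r hr => ?_
  simp only [Finset.mem_Icc] at hr
  have hfil2 : Finset.filter (fun j : ℕ => r.natAbs ≤ j) (range (n+1)) = Icc r.natAbs n := by
    ext j
    simp only [Finset.mem_filter, Finset.mem_range, Finset.mem_Icc]
    omega
  rw [← Finset.sum_filter, hfil2]
  have hs : r.natAbs ≤ n := by omega
  have hK := lemK hP r.natAbs n hs
  have conv1 : ∀ j ∈ Icc r.natAbs n,
      q^(j^2) * α r / (qp q q (n-j) * qp q q ((j:ℤ)-r).toNat * qp q q ((j:ℤ)+r).toNat)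
      = α r * (q^(j^2) / (qp q q (n-j) * qp q q (j - r.natAbs) * qp q q (j + r.natAbs))) := by
    intro j hj
    simp only [Finset.mem_Icc] at hj
    rcases Int.natAbs_eq r with hr' | hr'
    · rw [show ((j:ℤ)-r).toNat = j - r.natAbs from by omega,
        show ((j:ℤ)+r).toNat = j + r.natAbs from by omega]
      ring
    · rw [show ((j:ℤ)-r).toNat = j + r.natAbs from by omega,
        show ((j:ℤ)+r).toNat = j - r.natAbs from by omega,
        show qp q q (n-j) * qp q q (j + r.natAbs) * qp q q (j - r.natAbs)
          = qp q q (n-j) * qp q q (j - r.natAbs) * qp q q (j + r.natAbs) from by ring]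
      ring
  rw [Finset.sum_congr rfl conv1, ← Finset.mul_sum, hK]
  have hq2 : (q:ℂ)^((r:ℤ)^2) = q^(r.natAbs^2) := by
    rw [show (r:ℤ)^2 = ((r.natAbs^2 : ℕ) : ℤ) from by push_cast [Int.natAbs_sq]; rw [sq_abs], zpow_natCast]
  rcases Int.natAbs_eq r with hr' | hr'
  · rw [show ((n:ℤ)-r).toNat = n - r.natAbs from by omega,
      show ((n:ℤ)+r).toNat = n + r.natAbs from by omega, hq2]
    ring
  · rw [show ((n:ℤ)-r).toNat = n + r.natAbs from by omega,
      show ((n:ℤ)+r).toNat = n - r.natAbs from by omega, hq2,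
      show qp q q (n + r.natAbs) * qp q q (n - r.natAbs)
        = qp q q (n - r.natAbs) * qp q q (n + r.natAbs) from by ring]
    ring
end

theorem stmt15 (q : ℂ) (hq0 : q ≠ 0) (hq : ‖q‖ < 1) (n : ℕ) :
    ∑ k ∈ Finset.range (n + 1), q ^ (k ^ 2) * gam q k / (qp q q k * qp q q (n - k))
      = ∑ k ∈ Finset.Icc (-(n : ℤ)) (n : ℤ),
          (-1 : ℂ) ^ k * q ^ (3 * k ^ 2)
            / (qp q q ((n : ℤ) - k).toNat * qp q q ((n : ℤ) + k).toNat) := by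
  have hP : ∀ m : ℕ, qp q q m ≠ 0 := fun m => qp_ne_zero hq hq.le m
  have habs2 : ‖q^2‖ < 1 := by
    rw [norm_pow]
    exact pow_lt_one₀ (norm_nonneg q) hq (by norm_num)
  have hE : ∀ m, qp (q^2) (q^2) m ≠ 0 := fun m => qp_ne_zero habs2 habs2.le m
  have hO : ∀ m, qp q (q^2) m ≠ 0 := fun m => qp_ne_zero hq habs2.le m
  have hneg : ∀ m, qp (-q) q m ≠ 0 := by
    intro m
    have h := hE m
    rw [← qp_mul_qp_neg] at h
    exact right_ne_zero_of_mul h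
  calc
    ∑ k ∈ Finset.range (n + 1), q ^ (k ^ 2) * gam q k / (qp q q k * qp q q (n - k))
      = ∑ k ∈ Finset.range (n + 1),
          q^(k^2) * (∑ j ∈ range (k+1),
            q^(j^2) * (∑ r ∈ Icc (-(j:ℤ)) (j:ℤ),
              ((-1:ℂ)^r * q^(r^2)) / (qp q q ((j:ℤ)-r).toNat * qp q q ((j:ℤ)+r).toNat))
              / qp q q (k-j)) / qp q q (n-k) := by
        refine Finset.sum_congr rfl fun k _ => ?_
        have h1 : gam q k = qp q q k * ∑ j ∈ range (k+1),
            q^(j^2) * (∑ r ∈ Icc (-(j:ℤ)) (j:ℤ),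
              ((-1:ℂ)^r * q^(r^2)) / (qp q q ((j:ℤ)-r).toNat * qp q q ((j:ℤ)+r).toNat))
              / qp q q (k-j) := by
          simp only [gam]
          rw [Finset.mul_sum (Finset.range (k+1))]
          refine Finset.sum_congr rfl fun j _ => ?_
          rw [gauss_recip hP hq0 hO hE j]
          simp only [qbinom]
          have hEj := qp_mul_qp_neg q j
          rw [← hEj]
          field_simp [hP j, hP (k-j), hP k, hneg j]
        rw [h1]
        field_simp [hP k, hP (n-k)]
    _ = ∑ k ∈ Finset.range (n + 1),
          q^(k^2) * (∑ r ∈ Icc (-(k:ℤ)) (k:ℤ),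
            ((-1:ℂ)^r * q^(2*r^2)) / (qp q q ((k:ℤ)-r).toNat * qp q q ((k:ℤ)+r).toNat))
            / qp q q (n-k) := by
        refine Finset.sum_congr rfl fun k _ => ?_
        have hb := bailey_step hP hq0 (fun r => (-1:ℂ)^r * q^(r^2)) k
        rw [hb]
        have h2 : (∑ r ∈ Icc (-(k:ℤ)) (k:ℤ),
            q^((r:ℤ)^2) * ((-1:ℂ)^r * q^(r^2)) / (qp q q ((k:ℤ)-r).toNat * qp q q ((k:ℤ)+r).toNat))
            = ∑ r ∈ Icc (-(k:ℤ)) (k:ℤ),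
            ((-1:ℂ)^r * q^(2*r^2)) / (qp q q ((k:ℤ)-r).toNat * qp q q ((k:ℤ)+r).toNat) := by
          refine Finset.sum_congr rfl fun r _ => ?_
          rw [show (q:ℂ)^((r:ℤ)^2) * ((-1:ℂ)^r * q^(r^2)) = (-1:ℂ)^r * q^(2*r^2) from by
            rw [show (2:ℤ)*r^2 = r^2 + r^2 from by ring, zpow_add₀ hq0]; ring]
        rw [h2]
    _ = ∑ r ∈ Icc (-(n:ℤ)) (n:ℤ),
          q^((r:ℤ)^2) * ((-1:ℂ)^r * q^(2*r^2))
            / (qp q q ((n:ℤ)-r).toNat * qp q q ((n:ℤ)+r).toNat) := by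
        have hb := bailey_step hP hq0 (fun r => (-1:ℂ)^r * q^(2*r^2)) n
        rw [hb]
    _ = ∑ k ∈ Finset.Icc (-(n : ℤ)) (n : ℤ),
          (-1 : ℂ) ^ k * q ^ (3 * k ^ 2)
            / (qp q q ((n : ℤ) - k).toNat * qp q q ((n : ℤ) + k).toNat) := by
        refine Finset.sum_congr rfl fun r _ => ?_
        rw [show (q:ℂ)^((r:ℤ)^2) * ((-1:ℂ)^r * q^(2*r^2)) = (-1:ℂ)^r * q^(3*r^2) from by
          rw [show (3:ℤ)*r^2 = r^2 + 2*r^2 from by ring, zpow_add₀ hq0]; ring]
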